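/- Let T > 0, σ > 0, S₀ > 0, K > 0, r ∈ ℝ, and let W be a real random variable distributed according to the Gaussian measure with mean 0 and variance T. Set c = (log(K/S₀) − (r − σ²/2)·T)/σ. Then E[ S₀ · exp(σ·W − σ²T/2) · 1_{W ≥ c} ] = S₀ · Φ(d₁), where d₁ = (1/(σ√T))·(log(S₀/K) + (r + σ²/2)·T). -/

import Mathlib

open MeasureTheory ProbabilityTheory Real
open scoped NNReal ENNReal

/-- The standard normal cumulative distribution function
`Φ(x) = (1/√(2π)) ∫_{-∞}^x e^{-y²/2} dy`. -/
noncomputable def stdNormalCDF (x : ℝ) : ℝ :=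
  (Real.sqrt (2 * Real.pi))⁻¹ * ∫ y in Set.Iic x, Real.exp (-y ^ 2 / 2)

lemma integral_gaussianReal_eq (T : NNReal) (hT : T ≠ 0) (g : ℝ → ℝ) :
    ∫ x, g x ∂(gaussianReal 0 T) = ∫ x, gaussianPDFReal 0 T x * g x := by
  rw [gaussianReal_of_var_ne_zero 0 hT]
  have h : gaussianPDF 0 T = fun x =>
      ((Real.toNNReal (gaussianPDFReal 0 T x) : ℝ≥0) : ℝ≥0∞) := rfl
  rw [h, integral_withDensity_eq_integral_smul
    ((measurable_gaussianPDFReal 0 T).real_toNNReal) g]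
  congr 1
  ext x
  rw [NNReal.smul_def, smul_eq_mul, Real.coe_toNNReal _ (gaussianPDFReal_nonneg _ _ _)]

/-- The stock-price part of the Black–Scholes–Merton call price:
`E[S₀ e^{σW - σ²T/2} 1_{W ≥ c}] = S₀ Φ(d₁)`. -/
theorem bsm_stock_part (T : NNReal) (hT : 0 < T) (σ S₀ K r : ℝ)
    (hσ : 0 < σ) (hS₀ : 0 < S₀) (hK : 0 < K) :
    ∫ w, S₀ * Real.exp (σ * w - σ ^ 2 * T / 2) *
        Set.indicator
          {w : ℝ | (Real.log (K / S₀) - (r - σ ^ 2 / 2) * T) / σ ≤ w}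
          (fun _ => (1 : ℝ)) w ∂(gaussianReal 0 T)
      = S₀ * stdNormalCDF ((1 / (σ * Real.sqrt T)) *
          (Real.log (S₀ / K) + (r + σ ^ 2 / 2) * T)) := by
  have ht : (0:ℝ) < (T:ℝ) := hT
  have hsT : (0:ℝ) < Real.sqrt T := Real.sqrt_pos.2 ht
  set c : ℝ := (Real.log (K / S₀) - (r - σ ^ 2 / 2) * T) / σ with hc
  set d : ℝ := (1 / (σ * Real.sqrt T)) * (Real.log (S₀ / K) + (r + σ ^ 2 / 2) * T) with hd
  have hs2 : Real.sqrt T * Real.sqrt T = (T:ℝ) := Real.mul_self_sqrt ht.le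
  -- key algebraic identity
  have hcd : c = σ * T - Real.sqrt T * d := by
    have hlog : Real.log (K / S₀) = - Real.log (S₀ / K) := by
      rw [← Real.log_inv, inv_div]
    have h1 : Real.sqrt T * (1 / (σ * Real.sqrt T)) = 1 / σ := by
      field_simp
    rw [hc, hd, hlog, ← mul_assoc, h1]
    field_simp
    ring
  rw [integral_gaussianReal_eq T hT.ne']
  -- rewrite integrand as an indicator
  have hset : {w : ℝ | c ≤ w} = Set.Ici c := rfl
  have hstep : (fun x => gaussianPDFReal 0 T x *
      (S₀ * Real.exp (σ * x - σ ^ 2 * T / 2) *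
        Set.indicator {w : ℝ | c ≤ w} (fun _ => (1:ℝ)) x))
      = fun x => S₀ * (Real.sqrt (2 * π * T))⁻¹ *
          Set.indicator (Set.Ici c) (fun x => Real.exp (-(x - σ * T)^2 / (2 * T))) x := by
    funext x
    by_cases hx : x ∈ Set.Ici c
    · rw [hset, Set.indicator_of_mem hx, Set.indicator_of_mem hx]
      rw [gaussianPDFReal]
      have : Real.exp (- (x - 0)^2 / (2 * T)) * Real.exp (σ * x - σ ^ 2 * T / 2)
          = Real.exp (-(x - σ * T)^2 / (2 * T)) := by
        rw [← Real.exp_add]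
        congr 1
        field_simp
        ring
      calc (√(2 * π * ↑T))⁻¹ * rexp (-(x - 0) ^ 2 / (2 * ↑T)) *
            (S₀ * rexp (σ * x - σ ^ 2 * ↑T / 2) * 1)
          = S₀ * (√(2 * π * ↑T))⁻¹ *
            (rexp (-(x - 0) ^ 2 / (2 * ↑T)) * rexp (σ * x - σ ^ 2 * ↑T / 2)) := by ring
        _ = _ := by rw [this]
    · rw [hset, Set.indicator_of_notMem hx, Set.indicator_of_notMem hx]
      ring
  rw [hstep]
  rw [MeasureTheory.integral_const_mul]
  -- substitution x = √T y + σT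
  set F : ℝ → ℝ := fun x => Set.indicator (Set.Ici c)
    (fun x => Real.exp (-(x - σ * T)^2 / (2 * T))) x with hF
  have hsub : ∫ x, F x = Real.sqrt T * ∫ y, F (Real.sqrt T * y + σ * T) := by
    have h1 : ∫ y, F (Real.sqrt T * y + σ * T)
        = |(Real.sqrt T)⁻¹| • ∫ z, F (z + σ * T) :=
      Measure.integral_comp_mul_left (fun z => F (z + σ * T)) (Real.sqrt T)
    have h2 : ∫ z, F (z + σ * T) = ∫ x, F x :=
      integral_add_right_eq_self F (σ * T)
    rw [h1, h2, abs_of_pos (inv_pos.2 hsT), smul_eq_mul, ← mul_assoc,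
      mul_inv_cancel₀ hsT.ne', one_mul]
  have hFval : ∀ y, F (Real.sqrt T * y + σ * T)
      = Set.indicator (Set.Ici (-d)) (fun y => Real.exp (-y ^ 2 / 2)) y := by
    intro y
    have hmem : (Real.sqrt T * y + σ * T ∈ Set.Ici c) ↔ (y ∈ Set.Ici (-d)) := by
      simp only [Set.mem_Ici, hcd]
      constructor
      · intro h
        have : Real.sqrt T * (-d) ≤ Real.sqrt T * y := by linarith
        exact le_of_mul_le_mul_left (by linarith [this]) hsT
      · intro h
        have := mul_le_mul_of_nonneg_left h hsT.le
        linarith [this]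
    have hval : Real.exp (-(Real.sqrt T * y + σ * T - σ * T)^2 / (2 * T))
        = Real.exp (-y ^ 2 / 2) := by
      congr 1
      have : (Real.sqrt T * y + σ * (T:ℝ) - σ * T)^2 = (T:ℝ) * y ^ 2 := by
        have : (Real.sqrt T * y)^2 = (T:ℝ) * y^2 := by
          rw [mul_pow]; rw [sq, hs2]
        simpa using this
      rw [this]
      field_simp
    by_cases hy : y ∈ Set.Ici (-d)
    · rw [Set.indicator_of_mem hy]
      simp only [hF]
      rw [Set.indicator_of_mem (hmem.2 hy), hval]
    · rw [Set.indicator_of_notMem hy]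
      simp only [hF]
      rw [Set.indicator_of_notMem (fun h => hy (hmem.1 h))]
  have hrefl : ∫ y, Set.indicator (Set.Ici (-d)) (fun y => Real.exp (-y ^ 2 / 2)) y
      = ∫ y, Set.indicator (Set.Iic d) (fun y => Real.exp (-y ^ 2 / 2)) y := by
    rw [← MeasureTheory.integral_neg_eq_self
      (fun y => Set.indicator (Set.Ici (-d)) (fun y => Real.exp (-y ^ 2 / 2)) y) volume]
    congr 1
    funext y
    by_cases hy : y ∈ Set.Iic d
    · rw [Set.indicator_of_mem hy,
        Set.indicator_of_mem (by simpa using Set.mem_Iic.1 hy : -y ∈ Set.Ici (-d))]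
      simp
    · simp only [Set.mem_Iic, not_le] at hy
      have h1 : -y ∉ Set.Ici (-d) := by simp only [Set.mem_Ici, not_le]; linarith
      have h2 : y ∉ Set.Iic d := by simp only [Set.mem_Iic, not_le]; exact hy
      rw [Set.indicator_of_notMem h2, Set.indicator_of_notMem h1]
  rw [hsub]
  have : (fun y => F (Real.sqrt T * y + σ * T))
      = fun y => Set.indicator (Set.Ici (-d)) (fun y => Real.exp (-y ^ 2 / 2)) y := by
    funext y; exact hFval y
  rw [this, hrefl, MeasureTheory.integral_indicator measurableSet_Iic]
  -- constants
  rw [stdNormalCDF]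
  have hsplit : Real.sqrt (2 * π * T) = Real.sqrt (2 * π) * Real.sqrt T :=
    Real.sqrt_mul (by positivity) _
  have h2π : Real.sqrt (2 * π) ≠ 0 := by positivity
  rw [hsplit, mul_inv]
  field_simp
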